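/- arXiv:2407.15292 — 4 statements merged into one kernel-verified Lean document; each statement's English description precedes it below -/
import Mathlib

section
/- Fix constants λ₀ > 0 and p > 1, and define t_0 := 0, t_{n+1} := t_n + 1/(n+1)^p, λ_n := n^{2(p+1)} + λ₀ for n ∈ ℕ, and s_0 := 0, s_n := Σ_{j=0}^{n-1} λ_j (t_{j+1} − t_j) for n ≥ 1. Then for every natural number n ≥ max{1, λ₀} one has s_n/(n + √(λ_{n+1})) ≥ (n−1)^{2(p+1)} / (2√2 · (n+1)^{2p+1}). -/
/-- With `t 0 = 0`, `t (n+1) = t n + 1/(n+1)^p`, `λ n = n^(2(p+1)) + λ₀`, and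
`s n = ∑_{j<n} λ j (t (j+1) - t j)`, for every `n ≥ max {1, λ₀}` one has
`s n / (n + √(λ (n+1))) ≥ (n-1)^(2(p+1)) / (2√2 (n+1)^(2p+1))`. -/
theorem stmt_1 (lam0 p : ℝ) (hlam0 : 0 < lam0) (hp : 1 < p)
    (t lam s : ℕ → ℝ)
    (ht0 : t 0 = 0)
    (ht : ∀ n : ℕ, t (n + 1) = t n + 1 / ((n : ℝ) + 1) ^ p)
    (hlam : ∀ n : ℕ, lam n = (n : ℝ) ^ (2 * (p + 1)) + lam0)
    (hs : ∀ n : ℕ, s n = ∑ j ∈ Finset.range n, lam j * (t (j + 1) - t j)) :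
    ∀ n : ℕ, max 1 lam0 ≤ (n : ℝ) →
      s n / ((n : ℝ) + Real.sqrt (lam (n + 1))) ≥
        ((n : ℝ) - 1) ^ (2 * (p + 1)) / (2 * Real.sqrt 2 * ((n : ℝ) + 1) ^ (2 * p + 1)) := by
  intro n hn
  have hn1 : (1:ℝ) ≤ (n:ℝ) := le_trans (le_max_left _ _) hn
  have hnl : lam0 ≤ (n:ℝ) := le_trans (le_max_right _ _) hn
  have hn1' : 1 ≤ n := by exact_mod_cast hn1
  have hN0 : (0:ℝ) < (n:ℝ) := lt_of_lt_of_le one_pos hn1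
  set N : ℝ := (n:ℝ) with hNdef
  have hcast : ((n-1:ℕ):ℝ) = N - 1 := by
    rw [Nat.cast_sub hn1']; norm_num; rfl
  -- each term of the sum
  have hterm : ∀ j : ℕ, lam j * (t (j+1) - t j)
      = ((j:ℝ)^(2*(p+1)) + lam0) * (1 / ((j:ℝ)+1)^p) := by
    intro j
    rw [hlam j, ht j]; ring
  have hnonneg : ∀ j ∈ Finset.range n, 0 ≤ lam j * (t (j+1) - t j) := by
    intro j _
    rw [hterm j]
    have h1 : (0:ℝ) ≤ (j:ℝ)^(2*(p+1)) := Real.rpow_nonneg (Nat.cast_nonneg j) _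
    have h2 : (0:ℝ) < ((j:ℝ)+1)^p := Real.rpow_pos_of_pos (by positivity) _
    positivity
  -- lower bound on s n by its last term
  have hsn : (N-1)^(2*(p+1)) / N^p ≤ s n := by
    have hmem : n - 1 ∈ Finset.range n := Finset.mem_range.mpr (by omega)
    have hsingle := Finset.single_le_sum hnonneg hmem
    rw [← hs n] at hsingle
    rw [hterm (n-1), hcast] at hsingle
    have hNeq : N - 1 + 1 = N := by ring
    rw [hNeq] at hsingle
    have hNp : (0:ℝ) < N^p := Real.rpow_pos_of_pos hN0 _
    calc (N-1)^(2*(p+1)) / N^p ≤ ((N-1)^(2*(p+1)) + lam0) / N^p := by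
          gcongr; linarith
      _ = ((N-1)^(2*(p+1)) + lam0) * (1 / N^p) := by ring
      _ ≤ s n := hsingle
  -- denominator bound
  have hB0 : (0:ℝ) < (N+1)^(p+1) := Real.rpow_pos_of_pos (by linarith) _
  have hBsq : ((N+1)^(p+1))^2 = (N+1)^(2*(p+1)) := by
    rw [← Real.rpow_natCast ((N+1)^(p+1)) 2, ← Real.rpow_mul (by linarith)]
    norm_num; ring_nf
  have hsqrtB : Real.sqrt ((N+1)^(2*(p+1))) = (N+1)^(p+1) := by
    rw [← hBsq, Real.sqrt_sq hB0.le]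
  have hlam0le : lam0 ≤ (N+1)^(2*(p+1)) := by
    calc lam0 ≤ N := hnl
      _ ≤ N + 1 := by linarith
      _ = (N+1)^(1:ℝ) := (Real.rpow_one _).symm
      _ ≤ (N+1)^(2*(p+1)) := Real.rpow_le_rpow_of_exponent_le (by linarith) (by linarith)
  have hNleB : N ≤ (N+1)^(p+1) := by
    calc N ≤ N + 1 := by linarith
      _ = (N+1)^(1:ℝ) := (Real.rpow_one _).symm
      _ ≤ (N+1)^(p+1) := Real.rpow_le_rpow_of_exponent_le (by linarith) (by linarith)
  have hsqrt2 : (1:ℝ) ≤ Real.sqrt 2 := by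
    nlinarith [Real.sq_sqrt (by norm_num : (0:ℝ) ≤ 2), Real.sqrt_nonneg 2]
  have hlamn1 : lam (n+1) = (N+1)^(2*(p+1)) + lam0 := by
    rw [hlam]; push_cast; ring_nf; rw [hNdef]; ring
  have hsqrtlam : Real.sqrt (lam (n+1)) ≤ Real.sqrt 2 * (N+1)^(p+1) := by
    calc Real.sqrt (lam (n+1)) ≤ Real.sqrt (2 * (N+1)^(2*(p+1))) := by
          apply Real.sqrt_le_sqrt
          rw [hlamn1]; linarith
      _ = Real.sqrt 2 * Real.sqrt ((N+1)^(2*(p+1))) := Real.sqrt_mul (by norm_num) _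
      _ = Real.sqrt 2 * (N+1)^(p+1) := by rw [hsqrtB]
  have hdenom : N + Real.sqrt (lam (n+1)) ≤ 2 * Real.sqrt 2 * (N+1)^(p+1) := by
    have h1 : N ≤ Real.sqrt 2 * (N+1)^(p+1) := by
      calc N ≤ (N+1)^(p+1) := hNleB
        _ ≤ Real.sqrt 2 * (N+1)^(p+1) := by nlinarith
    linarith
  have hdenompos : (0:ℝ) < N + Real.sqrt (lam (n+1)) := by
    have := Real.sqrt_nonneg (lam (n+1)); linarith
  -- combine
  have hA0 : (0:ℝ) ≤ (N-1)^(2*(p+1)) := Real.rpow_nonneg (by linarith) _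
  have hsplit : (N+1)^(2*p+1) = (N+1)^p * (N+1)^(p+1) := by
    rw [← Real.rpow_add (by linarith)]; ring_nf
  have hNp0 : (0:ℝ) < N^p := Real.rpow_pos_of_pos hN0 _
  have hNple : N^p ≤ (N+1)^p := Real.rpow_le_rpow hN0.le (by linarith) (by linarith)
  have hsqrt2pos : (0:ℝ) < Real.sqrt 2 := by linarith
  rw [ge_iff_le]
  calc (N-1)^(2*(p+1)) / (2 * Real.sqrt 2 * (N+1)^(2*p+1))
      = (N-1)^(2*(p+1)) / (N^p * (2 * Real.sqrt 2 * (N+1)^(p+1)))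
        * (N^p / (N+1)^p) := by
        rw [hsplit]; field_simp
    _ ≤ (N-1)^(2*(p+1)) / (N^p * (2 * Real.sqrt 2 * (N+1)^(p+1))) * 1 := by
        have hX : (0:ℝ) ≤ (N-1)^(2*(p+1)) / (N^p * (2 * Real.sqrt 2 * (N+1)^(p+1))) := by
          positivity
        exact mul_le_mul_of_nonneg_left (div_le_one_of_le₀ hNple (by positivity)) hX
    _ = ((N-1)^(2*(p+1)) / N^p) / (2 * Real.sqrt 2 * (N+1)^(p+1)) := by
        rw [mul_one, div_div]
    _ ≤ s n / (N + Real.sqrt (lam (n+1))) := by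
        apply div_le_div₀ (le_trans (by positivity) hsn) hsn hdenompos hdenom
end

section
/- Let D := {(x,y) ∈ ℝ² : 0 ≤ y ≤ x ≤ 1} and let k : D → ℝ be continuous. Then there exists a continuous function l : D → ℝ such that for all (x,y) ∈ D both resolvent identities hold: l(x,y) = k(x,y) + ∫_y^x l(x,s)·k(s,y) ds and l(x,y) = k(x,y) + ∫_y^x k(x,s)·l(s,y) ds; moreover sup_{D} |l| ≤ (sup_{D} |k|)·e^{sup_{D}|k|}. -/
open MeasureTheory Set intervalIntegral Function

/-- Fubini on the triangle `y ≤ t ≤ s ≤ x`. -/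
private lemma fubini_triangle {F : ℝ → ℝ → ℝ} (hF : Continuous (Function.uncurry F))
    {x y : ℝ} (hyx : y ≤ x) :
    (∫ s in y..x, ∫ t in y..s, F s t) = ∫ t in y..x, ∫ s in t..x, F s t := by
  have hSmeas : MeasurableSet {p : ℝ × ℝ | p.2 ≤ p.1} :=
    (isClosed_le continuous_snd continuous_fst).measurableSet
  set H : ℝ × ℝ → ℝ := fun p => Set.indicator {p : ℝ × ℝ | p.2 ≤ p.1} (Function.uncurry F) p
    with hHdef
  have hint : Integrable (Function.uncurry fun s t => H (s, t))
      ((volume.restrict (Ioc y x)).prod (volume.restrict (Ioc y x))) := by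
    have : (Function.uncurry fun s t => H (s, t)) = H := rfl
    rw [this, Measure.prod_restrict]
    apply Integrable.indicator _ hSmeas
    exact ((hF.continuousOn.integrableOn_compact (isCompact_Icc.prod isCompact_Icc)).mono_set
      (Set.prod_mono Ioc_subset_Icc_self Ioc_subset_Icc_self))
  have key := MeasureTheory.integral_integral_swap hint
  have hL : (∫ s in Ioc y x, ∫ t in Ioc y x, H (s, t)) = ∫ s in y..x, ∫ t in y..s, F s t := by
    rw [intervalIntegral.integral_of_le hyx]
    apply setIntegral_congr_fun measurableSet_Ioc
    intro s hs
    dsimp only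
    have h1 : (fun t => H (s, t)) = Set.indicator (Iic s) (fun t => F s t) := by
      funext t
      by_cases h : t ≤ s <;> simp [hHdef, Set.indicator, h, Function.uncurry]
    rw [h1, MeasureTheory.setIntegral_indicator measurableSet_Iic,
      Ioc_inter_Iic, min_eq_right hs.2, intervalIntegral.integral_of_le hs.1.le]
  have hR : (∫ t in Ioc y x, ∫ s in Ioc y x, H (s, t)) = ∫ t in y..x, ∫ s in t..x, F s t := by
    rw [intervalIntegral.integral_of_le hyx]
    apply setIntegral_congr_fun measurableSet_Ioc
    intro t ht
    dsimp only
    have h1 : (fun s => H (s, t)) = Set.indicator (Ici t) (fun s => F s t) := by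
      funext s
      by_cases h : t ≤ s <;> simp [hHdef, Set.indicator, h, Function.uncurry]
    have h2 : Ioc y x ∩ Ici t = Icc t x := by
      ext s
      simp only [mem_inter_iff, mem_Ioc, mem_Ici, mem_Icc]
      constructor
      · rintro ⟨⟨_, h2⟩, h3⟩
        exact ⟨h3, h2⟩
      · rintro ⟨h1, h2⟩
        exact ⟨⟨lt_of_lt_of_le ht.1 h1, h2⟩, h1⟩
    rw [h1, MeasureTheory.setIntegral_indicator measurableSet_Ici, h2,
      MeasureTheory.integral_Icc_eq_integral_Ioc,
      ← intervalIntegral.integral_of_le ht.2]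
  rw [← hL, key, hR]

/-- Iterated Volterra kernels. -/
private noncomputable def iterK (g : ℝ × ℝ → ℝ) : ℕ → ℝ × ℝ → ℝ
  | 0 => g
  | n + 1 => fun p => ∫ s in p.2..p.1, g (p.1, s) * iterK g n (s, p.2)

private lemma iterK_cont {g : ℝ × ℝ → ℝ} (hg : Continuous g) : ∀ n, Continuous (iterK g n)
  | 0 => hg
  | (n + 1) => by
    have ih := iterK_cont hg n
    have hFu : Continuous (Function.uncurry fun (p : ℝ × ℝ) (s : ℝ) =>
        g (p.1, s) * iterK g n (s, p.2)) := by fun_prop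
    have heq : iterK g (n + 1) = fun p =>
        (∫ s in (0:ℝ)..p.1, g (p.1, s) * iterK g n (s, p.2)) -
        ∫ s in (0:ℝ)..p.2, g (p.1, s) * iterK g n (s, p.2) := by
      funext p
      show (∫ s in p.2..p.1, g (p.1, s) * iterK g n (s, p.2)) = _
      rw [intervalIntegral.integral_interval_sub_left]
      · exact Continuous.intervalIntegrable (by fun_prop) _ _
      · exact Continuous.intervalIntegrable (by fun_prop) _ _
    rw [heq]
    exact (intervalIntegral.continuous_parametric_intervalIntegral_of_continuous hFu
      continuous_fst).sub
      (intervalIntegral.continuous_parametric_intervalIntegral_of_continuous hFu continuous_snd)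

private lemma iterK_bound {g : ℝ × ℝ → ℝ} (hg : Continuous g) {M : ℝ} (hM0 : 0 ≤ M)
    (hgM : ∀ p, |g p| ≤ M) :
    ∀ n, ∀ x y : ℝ, y ≤ x → |iterK g n (x, y)| ≤ M ^ (n + 1) * (x - y) ^ n / n.factorial
  | 0 => by
    intro x y _
    simpa [iterK] using hgM (x, y)
  | (n + 1) => by
    intro x y hyx
    have ih := iterK_bound hg hM0 hgM n
    have hcont : Continuous fun s => g (x, s) * iterK g n (s, y) := by
      have := iterK_cont hg n; fun_prop
    calc |iterK g (n + 1) (x, y)|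
        = |∫ s in y..x, g (x, s) * iterK g n (s, y)| := rfl
      _ ≤ ∫ s in y..x, |g (x, s) * iterK g n (s, y)| :=
          intervalIntegral.abs_integral_le_integral_abs hyx
      _ ≤ ∫ s in y..x, M * (M ^ (n + 1) * (s - y) ^ n / n.factorial) := by
          apply intervalIntegral.integral_mono_on hyx
          · exact hcont.abs.intervalIntegrable _ _
          · exact Continuous.intervalIntegrable (by fun_prop) _ _
          · intro s hs
            rw [abs_mul]
            apply mul_le_mul (hgM (x, s)) (ih s y hs.1) (abs_nonneg _) hM0
      _ = M ^ (n + 2) * ∫ s in y..x, (s - y) ^ n / n.factorial := by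
          rw [← intervalIntegral.integral_const_mul]
          congr 1; funext s; ring
      _ = M ^ (n + 2) * (x - y) ^ (n + 1) / (n + 1).factorial := by
          rw [intervalIntegral.integral_div, intervalIntegral.integral_comp_sub_right
            (fun u => u ^ n) y, integral_pow]
          rw [sub_self, zero_pow (Nat.succ_ne_zero n), Nat.factorial_succ]
          push_cast
          have h1 : (0:ℝ) < (n.factorial : ℝ) := by positivity
          field_simp
          ring

private lemma iterK_comm {g : ℝ × ℝ → ℝ} (hg : Continuous g) :
    ∀ n, ∀ x y : ℝ, y ≤ x →
      iterK g (n + 1) (x, y) = ∫ s in y..x, iterK g n (x, s) * g (s, y)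
  | 0 => fun x y _ => rfl
  | (n + 1) => by
    intro x y hyx
    have ih := iterK_comm hg n
    have hcn := iterK_cont hg n
    have hF : Continuous (Function.uncurry fun s t =>
        g (x, s) * iterK g n (s, t) * g (t, y)) := by fun_prop
    have step1 : iterK g (n + 2) (x, y)
        = ∫ s in y..x, ∫ t in y..s, g (x, s) * iterK g n (s, t) * g (t, y) := by
      show (∫ s in y..x, g (x, s) * iterK g (n + 1) (s, y)) = _
      apply intervalIntegral.integral_congr
      intro s hs
      rw [Set.uIcc_of_le hyx] at hs
      dsimp only
      rw [ih s y hs.1, ← intervalIntegral.integral_const_mul]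
      apply intervalIntegral.integral_congr
      intro t _
      dsimp only
      ring
    rw [step1, fubini_triangle hF hyx]
    apply intervalIntegral.integral_congr
    intro t ht
    dsimp only
    rw [show iterK g (n + 1) (x, t) = ∫ s in t..x, g (x, s) * iterK g n (s, t) from rfl,
      ← intervalIntegral.integral_mul_const]


/-- Existence of the resolvent (inverse) Volterra kernel: for continuous `k` on the triangle
`D = {(x,y) : 0 ≤ y ≤ x ≤ 1}` there is a continuous `l` on `D` satisfying both resolvent
identities `l = k + l ∗ k = k + k ∗ l`, with `sup_D |l| ≤ (sup_D |k|) e^{sup_D |k|}`. -/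
theorem stmt_12 (D : Set (ℝ × ℝ))
    (hD : D = {p : ℝ × ℝ | 0 ≤ p.2 ∧ p.2 ≤ p.1 ∧ p.1 ≤ 1})
    (k : ℝ × ℝ → ℝ) (hk : ContinuousOn k D) :
    ∃ l : ℝ × ℝ → ℝ, ContinuousOn l D ∧
      (∀ x y : ℝ, (x, y) ∈ D →
        (l (x, y) = k (x, y) + ∫ s in y..x, l (x, s) * k (s, y)) ∧
        (l (x, y) = k (x, y) + ∫ s in y..x, k (x, s) * l (s, y))) ∧
      (∀ p ∈ D, |l p| ≤ sSup ((fun q => |k q|) '' D) *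
        Real.exp (sSup ((fun q => |k q|) '' D))) := by
  have hDmem : ∀ p : ℝ × ℝ, p ∈ D ↔ 0 ≤ p.2 ∧ p.2 ≤ p.1 ∧ p.1 ≤ 1 := by
    intro p; rw [hD]; rfl
  -- a continuous retraction of the plane onto `D`
  set r : ℝ × ℝ → ℝ × ℝ :=
    fun p => (min (max p.1 0) 1, min (max p.2 0) (min (max p.1 0) 1)) with hrdef
  have hrcont : Continuous r := by fun_prop
  have hrD : ∀ p, r p ∈ D := by
    intro p
    rw [hDmem]
    exact ⟨le_min (le_max_right _ _) (le_min (le_max_right _ _) zero_le_one),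
      min_le_right _ _, min_le_right _ _⟩
  have hrid : ∀ p ∈ D, r p = p := by
    intro p hp
    rw [hDmem] at hp
    obtain ⟨h1, h2, h3⟩ := hp
    have h0 : 0 ≤ p.1 := le_trans h1 h2
    have ha : min (max p.1 0) 1 = p.1 := by rw [max_eq_left h0, min_eq_left h3]
    rw [hrdef]
    dsimp only
    rw [ha, max_eq_left h1, min_eq_left h2]
  -- the globally-defined extension of `k`
  set g : ℝ × ℝ → ℝ := fun p => k (r p) with hgdef
  have hgcont : Continuous g := hk.comp_continuous hrcont hrD
  have hgD : ∀ p ∈ D, g p = k p := by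
    intro p hp; rw [hgdef]; dsimp only; rw [hrid p hp]
  -- the uniform bound `M`
  set M : ℝ := sSup ((fun q => |k q|) '' D) with hMdef
  have hDclosed : IsClosed D := by
    rw [hD, Set.setOf_and, Set.setOf_and]
    exact (isClosed_le continuous_const continuous_snd).inter
      ((isClosed_le continuous_snd continuous_fst).inter
        (isClosed_le continuous_fst continuous_const))
  have hDsub : D ⊆ Icc ((0:ℝ), (0:ℝ)) (1, 1) := by
    intro p hp
    rw [hDmem] at hp
    obtain ⟨h1, h2, h3⟩ := hp
    constructor <;> constructor <;> dsimp <;> linarith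
  have hDcompact : IsCompact D := IsCompact.of_isClosed_subset isCompact_Icc hDclosed hDsub
  have hBdd : BddAbove ((fun q => |k q|) '' D) := hDcompact.bddAbove_image hk.abs
  have h00 : ((0:ℝ), (0:ℝ)) ∈ D := by rw [hDmem]; norm_num
  have hMk : ∀ p ∈ D, |k p| ≤ M := fun p hp => le_csSup hBdd ⟨p, hp, rfl⟩
  have hM0 : 0 ≤ M := le_trans (abs_nonneg _) (hMk _ h00)
  have hgM : ∀ p, |g p| ≤ M := fun p => hMk _ (hrD p)
  -- the dominating series
  set u : ℕ → ℝ := fun n => M ^ (n + 1) / n.factorial with hudef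
  have hu : Summable u := by
    apply ((Real.summable_pow_div_factorial M).mul_left M).congr
    intro n
    rw [hudef]
    dsimp only
    rw [pow_succ]
    ring
  have hDbd : ∀ n : ℕ, ∀ p ∈ D, ‖iterK g n p‖ ≤ u n := by
    intro n p hp
    rw [hDmem] at hp
    obtain ⟨h1, h2, h3⟩ := hp
    rw [Real.norm_eq_abs]
    calc |iterK g n p| = |iterK g n (p.1, p.2)| := rfl
      _ ≤ M ^ (n + 1) * (p.1 - p.2) ^ n / n.factorial :=
          iterK_bound hgcont hM0 hgM n p.1 p.2 h2
      _ ≤ M ^ (n + 1) * 1 / n.factorial := by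
          gcongr
          exact pow_le_one₀ (by linarith) (by linarith)
      _ = u n := by rw [hudef, mul_one]
  set l : ℝ × ℝ → ℝ := fun p => ∑' n, iterK g n p with hldef
  have hlcont : ContinuousOn l D :=
    continuousOn_tsum (fun n => (iterK_cont hgcont n).continuousOn) hu hDbd
  have hsum : ∀ p ∈ D, Summable fun n => iterK g n p := fun p hp =>
    Summable.of_norm_bounded hu (fun n => hDbd n p hp)
  refine ⟨l, hlcont, ?_, ?_⟩
  · -- the two resolvent identities
    intro x y hxy
    have hmem := (hDmem (x, y)).1 hxy
    obtain ⟨hy0, hyx, hx1⟩ := hmem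
    -- interchange of sum and integral
    have key : ∀ F : ℕ → ℝ → ℝ, (∀ n, Continuous (F n)) →
        (∀ n, ∀ s ∈ Set.Ioc y x, ‖F n s‖ ≤ M * u n) →
        ∑' n, ∫ s in Set.Ioc y x, F n s = ∫ s in Set.Ioc y x, ∑' n, F n s := by
      intro F hFc hFb
      apply MeasureTheory.integral_tsum_of_summable_integral_norm
      · intro n; exact (hFc n).integrableOn_Ioc
      · apply Summable.of_nonneg_of_le
          (fun n => integral_nonneg fun s => norm_nonneg _)
          (fun n => ?_) ((hu.mul_left M).mul_left (x - y))
        calc (∫ s in Set.Ioc y x, ‖F n s‖)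
            ≤ ∫ _s in Set.Ioc y x, M * u n := by
              apply MeasureTheory.setIntegral_mono_on ((hFc n).norm.integrableOn_Ioc)
                _ measurableSet_Ioc (hFb n)
              exact MeasureTheory.integrableOn_const
                (by rw [Real.volume_Ioc]; exact ENNReal.ofReal_ne_top)
          _ = (x - y) * (M * u n) := by
              rw [MeasureTheory.setIntegral_const, measureReal_def, Real.volume_Ioc, smul_eq_mul,
                ENNReal.toReal_ofReal (by linarith)]
    have hmem2 : ∀ s ∈ Set.Ioc y x, (s, y) ∈ D := by
      intro s hs; rw [hDmem]; exact ⟨hy0, hs.1.le, hs.2.trans hx1⟩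
    have hmem1 : ∀ s ∈ Set.Ioc y x, (x, s) ∈ D := by
      intro s hs; rw [hDmem]; exact ⟨le_trans hy0 hs.1.le, hs.2, hx1⟩
    have htsum0 := Summable.tsum_eq_zero_add (hsum (x, y) hxy)
    constructor
    · -- l = k + l ∗ k
      have hI : (∫ s in y..x, l (x, s) * g (s, y)) = ∑' n : ℕ, iterK g (n + 1) (x, y) := by
        rw [intervalIntegral.integral_of_le hyx]
        have hfun : (fun s => l (x, s) * g (s, y))
            = fun s => ∑' n : ℕ, iterK g n (x, s) * g (s, y) := by
          funext s; rw [hldef]; exact tsum_mul_right.symm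
        rw [hfun, ← key (fun n s => iterK g n (x, s) * g (s, y))
          (fun n => by have := iterK_cont hgcont n; fun_prop)
          (fun n s hs => by
            rw [norm_mul, mul_comm M (u n)]
            exact mul_le_mul (hDbd n (x, s) (hmem1 s hs)) (hgM (s, y)) (norm_nonneg _)
              (le_trans (norm_nonneg _) (hDbd n (x, s) (hmem1 s hs))))]
        apply tsum_congr
        intro n
        rw [← intervalIntegral.integral_of_le hyx, ← iterK_comm hgcont n x y hyx]
      have hIk : (∫ s in y..x, l (x, s) * k (s, y)) = ∫ s in y..x, l (x, s) * g (s, y) := by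
        apply intervalIntegral.integral_congr
        intro s hs
        rw [Set.uIcc_of_le hyx] at hs
        dsimp only
        rw [hgD (s, y) (by rw [hDmem]; exact ⟨hy0, hs.1, hs.2.trans hx1⟩)]
      rw [hIk, hI, ← hgD (x, y) hxy]
      exact htsum0
    · -- l = k + k ∗ l
      have hI : (∫ s in y..x, g (x, s) * l (s, y)) = ∑' n : ℕ, iterK g (n + 1) (x, y) := by
        rw [intervalIntegral.integral_of_le hyx]
        have hfun : (fun s => g (x, s) * l (s, y))
            = fun s => ∑' n : ℕ, g (x, s) * iterK g n (s, y) := by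
          funext s; rw [hldef]; exact tsum_mul_left.symm
        rw [hfun, ← key (fun n s => g (x, s) * iterK g n (s, y))
          (fun n => by have := iterK_cont hgcont n; fun_prop)
          (fun n s hs => by
            rw [norm_mul]
            exact mul_le_mul (hgM (x, s)) (hDbd n (s, y) (hmem2 s hs)) (norm_nonneg _) hM0)]
        apply tsum_congr
        intro n
        rw [← intervalIntegral.integral_of_le hyx]
        rfl
      have hIk : (∫ s in y..x, k (x, s) * l (s, y)) = ∫ s in y..x, g (x, s) * l (s, y) := by
        apply intervalIntegral.integral_congr
        intro s hs
        rw [Set.uIcc_of_le hyx] at hs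
        dsimp only
        rw [hgD (x, s) (by rw [hDmem]; exact ⟨le_trans hy0 hs.1, hs.2, hx1⟩)]
      rw [hIk, hI, ← hgD (x, y) hxy]
      exact htsum0
  · -- the sup bound
    intro p hp
    have h1 : Summable fun n => ‖iterK g n p‖ :=
      Summable.of_nonneg_of_le (fun n => norm_nonneg _) (fun n => hDbd n p hp) hu
    calc |l p| = ‖l p‖ := (Real.norm_eq_abs _).symm
      _ ≤ ∑' n, ‖iterK g n p‖ := norm_tsum_le_tsum_norm h1
      _ ≤ ∑' n, u n := Summable.tsum_le_tsum (fun n => hDbd n p hp) h1 hu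
      _ = M * Real.exp M := by
          rw [Real.exp_eq_exp_ℝ, NormedSpace.exp_eq_tsum_div, ← tsum_mul_left]
          apply tsum_congr
          intro n
          rw [hudef]
          dsimp only
          rw [pow_succ]
          ring
end

section
/- Let a > 0, c, and λ be real constants with λ + c > 0, and set μ := (λ + c)/a. Define k : ℝ² → ℝ by k(x,y) := −(μ/2)·y·Σ_{m=0}^∞ (μ(x²−y²)/4)^m / (m!·(m+1)!), which equals −μ·y·I₁(√(μ(x²−y²)))/√(μ(x²−y²)) where I₁ is the first-order modified Bessel function I₁(z) = Σ_{m=0}^∞ (z/2)^{2m+1}/(m!(m+1)!). Then k is infinitely differentiable on ℝ² and satisfies: (i) a·(∂²k/∂x²)(x,y) − a·(∂²k/∂y²)(x,y) = (λ + c)·k(x,y) for all (x,y) ∈ ℝ²; (ii) k(x,0) = 0 for all x; and (iii) k(x,x) = −((λ + c)/(2a))·x for all x, so that 2a·(d/dx)[k(x,x)] = −(λ + c). -/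
private noncomputable def FF (j : ℕ) (t : ℝ) : ℝ :=
  ∑' m : ℕ, t ^ m / ((Nat.factorial m : ℝ) * (Nat.factorial (m + j + 1) : ℝ))

private lemma fact_pos' (n : ℕ) : (0:ℝ) < (Nat.factorial n : ℝ) := by
  exact_mod_cast Nat.factorial_pos n

private lemma FF_term_bound (j : ℕ) (t : ℝ) (m : ℕ) :
    ‖t ^ m / ((Nat.factorial m : ℝ) * (Nat.factorial (m + j + 1) : ℝ))‖
      ≤ |t| ^ m / Nat.factorial m := by
  rw [Real.norm_eq_abs, abs_div, abs_pow,
    abs_of_pos (by positivity : (0:ℝ) < (Nat.factorial m : ℝ) * (Nat.factorial (m + j + 1) : ℝ))]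
  have h1 : (1:ℝ) ≤ (Nat.factorial (m + j + 1) : ℝ) := by
    exact_mod_cast (Nat.factorial_pos (m+j+1))
  have h2 := fact_pos' m
  gcongr
  nlinarith

private lemma FF_summable (j : ℕ) (t : ℝ) :
    Summable fun m : ℕ => t ^ m / ((Nat.factorial m : ℝ) * (Nat.factorial (m + j + 1) : ℝ)) :=
  Summable.of_norm_bounded (Real.summable_pow_div_factorial |t|) (FF_term_bound j t)

private lemma FF_deriv_bound (j : ℕ) (R : ℝ) (s : ℝ) (hs : |s| ≤ R) (m : ℕ) :
    ‖(m:ℝ) * s ^ (m-1) / ((Nat.factorial m : ℝ) * (Nat.factorial (m + j + 1) : ℝ))‖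
      ≤ (m:ℝ) * R ^ (m-1) / Nat.factorial m := by
  have hR : 0 ≤ R := le_trans (abs_nonneg s) hs
  rw [Real.norm_eq_abs, abs_div, abs_mul, abs_pow, Nat.abs_cast,
    abs_of_pos (by positivity : (0:ℝ) < (Nat.factorial m : ℝ) * (Nat.factorial (m + j + 1) : ℝ))]
  have h1 : (1:ℝ) ≤ (Nat.factorial (m + j + 1) : ℝ) := by
    exact_mod_cast (Nat.factorial_pos (m+j+1))
  have h2 := fact_pos' m
  gcongr
  nlinarith

private lemma FF_u_summable (R : ℝ) :
    Summable fun m : ℕ => (m:ℝ) * R ^ (m-1) / Nat.factorial m := by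
  rw [← summable_nat_add_iff 1]
  refine (Real.summable_pow_div_factorial R).congr fun n => ?_
  have h3 := fact_pos' n
  rw [Nat.factorial_succ]
  push_cast
  field_simp

private lemma FF_hasDerivAt (j : ℕ) (t : ℝ) : HasDerivAt (FF j) (FF (j+1) t) t := by
  set R : ℝ := |t| + 1 with hR
  have htR : |t| < R := by simp [hR]
  have hmem : t ∈ Metric.ball (0:ℝ) R := by
    simpa [Real.dist_eq] using htR
  have h0mem : (0:ℝ) ∈ Metric.ball (0:ℝ) R := by
    simp [hR]; positivity
  have main := hasDerivAt_tsum_of_isPreconnected (FF_u_summable R) Metric.isOpen_ball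
    (convex_ball (0:ℝ) R).isPreconnected
    (g := fun m s => s ^ m / ((Nat.factorial m : ℝ) * (Nat.factorial (m + j + 1) : ℝ)))
    (g' := fun m s => (m:ℝ) * s ^ (m-1) / ((Nat.factorial m : ℝ) * (Nat.factorial (m + j + 1) : ℝ)))
    (fun m s _ => (hasDerivAt_pow m s).div_const _)
    (fun m s hsm => FF_deriv_bound j R s (by
      simpa [Real.dist_eq] using (Metric.mem_ball.1 hsm).le) m)
    h0mem (FF_summable j 0) hmem
  have hsum' : Summable (fun m : ℕ =>
      (m:ℝ) * t ^ (m-1) / ((Nat.factorial m : ℝ) * (Nat.factorial (m + j + 1) : ℝ))) :=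
    Summable.of_norm_bounded (FF_u_summable R) (FF_deriv_bound j R t htR.le)
  have heq : (∑' m : ℕ, (m:ℝ) * t ^ (m-1) / ((Nat.factorial m : ℝ) * (Nat.factorial (m + j + 1) : ℝ)))
      = FF (j+1) t := by
    rw [Summable.tsum_eq_zero_add hsum']
    simp only [Nat.cast_zero, zero_mul, zero_div, zero_add]
    rw [FF]
    refine tsum_congr fun n => ?_
    have h2 : n+1+j+1 = n+(j+1)+1 := by omega
    rw [h2, Nat.factorial_succ n]
    have h3 := fact_pos' n
    have h4 := fact_pos' (n+(j+1)+1)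
    push_cast
    field_simp
  rw [heq] at main
  exact main

private lemma FF_contDiff (j : ℕ) : ContDiff ℝ (⊤:ℕ∞) (FF j) := by
  suffices h : ∀ n : ℕ, ∀ j, ContDiff ℝ (n:ℕ) (FF j) by
    exact contDiff_infty.2 fun n => h n j
  intro n
  induction n with
  | zero =>
      intro j
      rw [show ((0:ℕ):WithTop ℕ∞) = 0 by rfl, contDiff_zero]
      exact continuous_iff_continuousAt.2 fun t => (FF_hasDerivAt j t).continuousAt
  | succ n ih =>
      intro j
      rw [show ((n+1:ℕ):WithTop ℕ∞) = (n:ℕ) + 1 by push_cast; rfl, contDiff_succ_iff_deriv]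
      refine ⟨fun t => (FF_hasDerivAt j t).differentiableAt, by simp, ?_⟩
      have : deriv (FF j) = FF (j+1) := funext fun t => (FF_hasDerivAt j t).deriv
      rw [this]
      exact ih (j+1)

private lemma FF_ode (t : ℝ) : t * FF 2 t + 2 * FF 1 t = FF 0 t := by
  have h0 := FF_summable 0 t
  have h1 := (FF_summable 1 t).mul_left 2
  have hdiff : Summable (fun m : ℕ =>
      t ^ m / ((Nat.factorial m : ℝ) * (Nat.factorial (m + 0 + 1) : ℝ))
      - 2 * (t ^ m / ((Nat.factorial m : ℝ) * (Nat.factorial (m + 1 + 1) : ℝ)))) := h0.sub h1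
  have key : FF 0 t - 2 * FF 1 t = t * FF 2 t := by
    rw [FF, FF, FF, ← tsum_mul_left, ← tsum_mul_left, ← Summable.tsum_sub h0 h1,
      Summable.tsum_eq_zero_add hdiff]
    have hz : t ^ 0 / ((Nat.factorial 0 : ℝ) * (Nat.factorial (0 + 0 + 1) : ℝ))
        - 2 * (t ^ 0 / ((Nat.factorial 0 : ℝ) * (Nat.factorial (0 + 1 + 1) : ℝ))) = 0 := by
      norm_num [Nat.factorial]
    rw [hz, zero_add]
    refine tsum_congr fun n => ?_
    have e1 : n + 1 + 0 + 1 = n + 2 := by omega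
    have e2 : n + 1 + 1 + 1 = n + 3 := by omega
    have e3 : n + 2 + 1 = n + 3 := by omega
    rw [e1, e2, e3]
    have f1 := fact_pos' n
    have f2 := fact_pos' (n+1)
    have f3 := fact_pos' (n+2)
    have f4 := fact_pos' (n+3)
    have g1 : (Nat.factorial (n+1) : ℝ) = (n+1) * Nat.factorial n := by
      rw [Nat.factorial_succ]; push_cast; ring
    have g2 : (Nat.factorial (n+2) : ℝ) = (n+2) * Nat.factorial (n+1) := by
      rw [Nat.factorial_succ]; push_cast; ring
    have g3 : (Nat.factorial (n+3) : ℝ) = (n+3) * Nat.factorial (n+2) := by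
      rw [Nat.factorial_succ]; push_cast; ring
    rw [pow_succ, g3, g2, g1]
    field_simp
    ring
  linarith

private lemma FF_zero_val : FF 0 0 = 1 := by
  rw [FF, tsum_eq_single 0]
  · norm_num [Nat.factorial]
  · intro m hm
    simp [zero_pow hm]

/-- For constants `a > 0`, `c`, `λ` with `λ + c > 0` and `μ = (λ+c)/a`, the kernel
`k(x,y) = -(μ/2) y ∑_{m≥0} (μ(x²-y²)/4)^m/(m!(m+1)!)`
(`= -μ y I₁(√(μ(x²-y²)))/√(μ(x²-y²))`) is smooth on `ℝ²` and satisfies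
(i) `a k_xx - a k_yy = (λ+c) k`; (ii) `k(x,0) = 0`; (iii) `k(x,x) = -((λ+c)/(2a)) x`,
so that `2a (d/dx)[k(x,x)] = -(λ+c)`. -/
theorem stmt_14 (a c lam μ : ℝ) (ha : 0 < a) (hlc : 0 < lam + c)
    (hμ : μ = (lam + c) / a)
    (k : ℝ → ℝ → ℝ)
    (hk : ∀ x y : ℝ, k x y =
      -(μ / 2) * y * ∑' m : ℕ, (μ * (x ^ 2 - y ^ 2) / 4) ^ m /
        ((Nat.factorial m : ℝ) * (Nat.factorial (m + 1) : ℝ))) :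
    ContDiff ℝ (⊤ : ℕ∞) (fun p : ℝ × ℝ => k p.1 p.2) ∧
    (∀ x y : ℝ, a * iteratedDeriv 2 (fun x' => k x' y) x
        - a * iteratedDeriv 2 (fun y' => k x y') y = (lam + c) * k x y) ∧
    (∀ x : ℝ, k x 0 = 0) ∧
    (∀ x : ℝ, k x x = -((lam + c) / (2 * a)) * x) ∧
    (∀ x : ℝ, 2 * a * deriv (fun ξ => k ξ ξ) x = -(lam + c)) := by
  have ha' : a ≠ 0 := ne_of_gt ha
  have hk' : ∀ x y : ℝ, k x y = -(μ/2) * y * FF 0 (μ * (x^2 - y^2) / 4) := by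
    intro x y; rw [hk]; rfl
  have hμa : lam + c = μ * a := by rw [hμ]; field_simp
  have hUx : ∀ (y x : ℝ), HasDerivAt (fun x' : ℝ => μ * (x' ^ 2 - y ^ 2) / 4) (μ * x / 2) x := by
    intro y x
    have h := (((hasDerivAt_pow 2 x).sub_const (y^2)).const_mul μ).div_const 4
    refine h.congr_deriv ?_
    push_cast; ring
  have hUy : ∀ (x y : ℝ), HasDerivAt (fun y' : ℝ => μ * (x ^ 2 - y' ^ 2) / 4) (-(μ * y / 2)) y := by
    intro x y
    have h := (((hasDerivAt_pow 2 y).const_sub (x^2)).const_mul μ).div_const 4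
    refine h.congr_deriv ?_
    push_cast; ring
  have hFx : ∀ (j : ℕ) (y x : ℝ), HasDerivAt (fun x' => FF j (μ * (x'^2 - y^2)/4))
      (FF (j+1) (μ * (x^2 - y^2)/4) * (μ * x / 2)) x :=
    fun j y x => (FF_hasDerivAt j _).comp x (hUx y x)
  have hFy : ∀ (j : ℕ) (x y : ℝ), HasDerivAt (fun y' => FF j (μ * (x^2 - y'^2)/4))
      (FF (j+1) (μ * (x^2 - y^2)/4) * (-(μ * y / 2))) y :=
    fun j x y => (FF_hasDerivAt j _).comp y (hUy x y)
  have hkxfun : ∀ y : ℝ, (fun x' => k x' y) = fun x' => -(μ/2) * y * FF 0 (μ*(x'^2-y^2)/4) :=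
    fun y => funext fun x' => hk' x' y
  have hkyfun : ∀ x : ℝ, (fun y' => k x y') = fun y' => -(μ/2) * y' * FF 0 (μ*(x^2-y'^2)/4) :=
    fun x => funext fun y' => hk' x y'
  have hd1x : ∀ (y x : ℝ), HasDerivAt (fun x' => -(μ/2) * y * FF 0 (μ*(x'^2-y^2)/4))
      (-(μ/2) * y * (FF 1 (μ*(x^2-y^2)/4) * (μ*x/2))) x := fun y x => (hFx 0 y x).const_mul _
  have hderivx : ∀ (y : ℝ), deriv (fun x' => k x' y)
      = fun x' => -(μ/2) * y * (FF 1 (μ*(x'^2-y^2)/4) * (μ*x'/2)) := by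
    intro y; funext x
    rw [hkxfun y]
    exact (hd1x y x).deriv
  have hlin : ∀ x : ℝ, HasDerivAt (fun x' : ℝ => μ * x' / 2) (μ / 2) x := by
    intro x
    have h := ((hasDerivAt_id x).const_mul μ).div_const 2
    refine h.congr_deriv ?_
    ring
  have hd2x : ∀ (y x : ℝ), HasDerivAt (fun x' => -(μ/2) * y * (FF 1 (μ*(x'^2-y^2)/4) * (μ*x'/2)))
      (-(μ/2) * y * (FF 2 (μ*(x^2-y^2)/4) * (μ*x/2) * (μ*x/2) + FF 1 (μ*(x^2-y^2)/4) * (μ/2))) x :=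
    fun y x => ((hFx 1 y x).mul (hlin x)).const_mul _
  have hxx : ∀ (x y : ℝ), iteratedDeriv 2 (fun x' => k x' y) x
      = -(μ/2) * y * (FF 2 (μ*(x^2-y^2)/4) * (μ*x/2) * (μ*x/2) + FF 1 (μ*(x^2-y^2)/4) * (μ/2)) := by
    intro x y
    rw [iteratedDeriv_succ, iteratedDeriv_one, hderivx y]
    exact (hd2x y x).deriv
  have hid : ∀ y : ℝ, HasDerivAt (fun y' : ℝ => -(μ/2) * y') (-(μ/2)) y := by
    intro y
    have h := (hasDerivAt_id y).const_mul (-(μ/2))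
    refine h.congr_deriv ?_
    ring
  have hd1y : ∀ (x y : ℝ), HasDerivAt (fun y' => -(μ/2) * y' * FF 0 (μ*(x^2-y'^2)/4))
      (-(μ/2) * FF 0 (μ*(x^2-y^2)/4) + μ^2/4 * y^2 * FF 1 (μ*(x^2-y^2)/4)) y := by
    intro x y
    have h := (hid y).mul (hFy 0 x y)
    refine h.congr_deriv ?_
    ring
  have hderivy : ∀ (x : ℝ), deriv (fun y' => k x y')
      = fun y' => -(μ/2) * FF 0 (μ*(x^2-y'^2)/4) + μ^2/4 * y'^2 * FF 1 (μ*(x^2-y'^2)/4) := by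
    intro x; funext y
    rw [hkyfun x]
    exact (hd1y x y).deriv
  have hd2y : ∀ (x y : ℝ), HasDerivAt
      (fun y' => -(μ/2) * FF 0 (μ*(x^2-y'^2)/4) + μ^2/4 * y'^2 * FF 1 (μ*(x^2-y'^2)/4))
      (-(μ/2) * (FF 1 (μ*(x^2-y^2)/4) * (-(μ*y/2)))
        + (μ^2/4 * ((2:ℕ) * y^1) * FF 1 (μ*(x^2-y^2)/4)
           + μ^2/4 * y^2 * (FF 2 (μ*(x^2-y^2)/4) * (-(μ*y/2))))) y :=
    fun x y => ((hFy 0 x y).const_mul _).add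
      (((hasDerivAt_pow 2 y).const_mul (μ^2/4)).mul (hFy 1 x y))
  have hyy : ∀ (x y : ℝ), iteratedDeriv 2 (fun y' => k x y') y
      = -(μ/2) * (FF 1 (μ*(x^2-y^2)/4) * (-(μ*y/2)))
        + (μ^2/4 * ((2:ℕ) * y^1) * FF 1 (μ*(x^2-y^2)/4)
           + μ^2/4 * y^2 * (FF 2 (μ*(x^2-y^2)/4) * (-(μ*y/2)))) := by
    intro x y
    rw [iteratedDeriv_succ, iteratedDeriv_one, hderivy x]
    exact (hd2y x y).deriv
  have h3 : ∀ x : ℝ, k x x = -((lam + c) / (2 * a)) * x := by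
    intro x
    rw [hk']
    have h0 : μ * (x^2 - x^2)/4 = 0 := by ring
    rw [h0, FF_zero_val, mul_one, hμ, div_div, mul_comm a 2]
  refine ⟨?_, ?_, ?_, h3, ?_⟩
  · have hfun : (fun p : ℝ × ℝ => k p.1 p.2)
        = fun p : ℝ × ℝ => -(μ/2) * p.2 * FF 0 (μ*(p.1^2-p.2^2)/4) :=
      funext fun p => hk' p.1 p.2
    rw [hfun]
    have hin : ContDiff ℝ (⊤:ℕ∞) (fun p : ℝ×ℝ => μ*(p.1^2-p.2^2)/4) :=
      (contDiff_const.mul ((contDiff_fst.pow 2).sub (contDiff_snd.pow 2))).div_const 4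
    exact (contDiff_const.mul contDiff_snd).mul ((FF_contDiff 0).comp hin)
  · intro x y
    rw [hxx x y, hyy x y, hk' x y, hμa]
    have hode := FF_ode (μ*(x^2-y^2)/4)
    push_cast
    linear_combination (-(a*μ^2*y/2)) * hode
  · intro x
    rw [hk']
    ring
  · intro x
    have hfun : (fun ξ => k ξ ξ) = fun ξ => -((lam+c)/(2*a)) * ξ := funext h3
    have hd : HasDerivAt (fun ξ : ℝ => -((lam+c)/(2*a)) * ξ) (-((lam+c)/(2*a))) x := by
      simpa using (hasDerivAt_id x).const_mul (-((lam+c)/(2*a)))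
    rw [hfun, hd.deriv]
    field_simp
end

section
/- Let a > 0, c, and λ be real constants with λ + c > 0, and set μ := (λ + c)/a. Define l : ℝ² → ℝ by l(x,y) := −(μ/2)·y·Σ_{m=0}^∞ (−1)^m·(μ(x²−y²)/4)^m / (m!·(m+1)!), which equals −μ·y·J₁(√(μ(x²−y²)))/√(μ(x²−y²)) where J₁ is the first-order Bessel function J₁(z) = Σ_{m=0}^∞ (−1)^m (z/2)^{2m+1}/(m!(m+1)!). Then l is infinitely differentiable on ℝ² and satisfies: (i) a·(∂²l/∂x²)(x,y) − a·(∂²l/∂y²)(x,y) = −(λ + c)·l(x,y) for all (x,y) ∈ ℝ²; (ii) l(x,0) = 0 for all x; and (iii) l(x,x) = −((λ + c)/(2a))·x for all x, so that 2a·(d/dx)[l(x,x)] = −(λ + c). -/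
open Filter
noncomputable section SK15
namespace SK15

def c0 (m : ℕ) : ℝ := (-1) ^ m / ((Nat.factorial m : ℝ) * (Nat.factorial (m + 1) : ℝ))
def c1 (m : ℕ) : ℝ := (-1) ^ (m + 1) / ((Nat.factorial m : ℝ) * (Nat.factorial (m + 2) : ℝ))
def c2 (m : ℕ) : ℝ := (-1) ^ m / ((Nat.factorial m : ℝ) * (Nat.factorial (m + 3) : ℝ))

def g0 (t : ℝ) : ℝ := ∑' m, c0 m * t ^ m
def g1 (t : ℝ) : ℝ := ∑' m, c1 m * t ^ m
def g2 (t : ℝ) : ℝ := ∑' m, c2 m * t ^ m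

lemma fact_cast_succ (n : ℕ) : ((Nat.factorial (n + 1) : ℝ)) = (n + 1) * (Nat.factorial n : ℝ) := by
  exact_mod_cast Nat.factorial_succ n

lemma fact_pos' (n : ℕ) : (0:ℝ) < (Nat.factorial n : ℝ) := by exact_mod_cast Nat.factorial_pos n

lemma abs_coef_le (p m k : ℕ) :
    |(-1 : ℝ) ^ p / ((Nat.factorial m : ℝ) * (Nat.factorial k : ℝ))| ≤ 1 / (Nat.factorial m : ℝ) := by
  have h1 : (1 : ℝ) ≤ (Nat.factorial k : ℝ) := by
    exact_mod_cast Nat.one_le_iff_ne_zero.2 (Nat.factorial_ne_zero _)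
  have h2 := fact_pos' m
  rw [abs_div, abs_pow, abs_neg, abs_one, one_pow, abs_of_pos (by positivity)]
  rw [div_le_div_iff₀ (by positivity) h2]
  nlinarith

lemma c0_abs (m : ℕ) : |c0 m| ≤ 1 / (Nat.factorial m : ℝ) := abs_coef_le _ _ _
lemma c1_abs (m : ℕ) : |c1 m| ≤ 1 / (Nat.factorial m : ℝ) := abs_coef_le _ _ _
lemma c2_abs (m : ℕ) : |c2 m| ≤ 1 / (Nat.factorial m : ℝ) := abs_coef_le _ _ _

lemma neg_one_pow_succ (k : ℕ) : ((-1 : ℝ)) ^ (k + 1) = -((-1 : ℝ)) ^ k := by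
  rw [pow_succ]; ring

lemma c0_shift (k : ℕ) : c0 (k + 1) * ((k : ℝ) + 1) = c1 k := by
  simp only [c0, c1]
  have h1 := fact_cast_succ k
  have p1 := fact_pos' k
  have : k + 1 + 1 = k + 2 := rfl
  rw [this, h1]
  have p2 := fact_pos' (k+2)
  field_simp

lemma c1_shift (k : ℕ) : c1 (k + 1) * ((k : ℝ) + 1) = c2 k := by
  simp only [c1, c2]
  have h1 := fact_cast_succ k
  have p1 := fact_pos' k
  have : k + 1 + 2 = k + 3 := rfl
  rw [this, h1, neg_one_pow_succ (k+1), neg_one_pow_succ k]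
  have p2 := fact_pos' (k+3)
  field_simp

lemma ode_term (k : ℕ) : (2 * c1 (k + 1) + c0 (k + 1)) = -c2 k := by
  simp only [c0, c1, c2]
  have h1 := fact_cast_succ k
  have h2 := fact_cast_succ (k + 1)
  have h3 := fact_cast_succ (k + 2)
  have p1 := fact_pos' k
  have p2 := fact_pos' (k+1)
  have p3 := fact_pos' (k+2)
  have p4 := fact_pos' (k+3)
  have e1 : k + 1 + 2 = k + 3 := rfl
  have e2 : k + 1 + 1 = k + 2 := rfl
  rw [e1, e2, neg_one_pow_succ (k+1), neg_one_pow_succ k]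
  rw [show Nat.factorial (k+3) = Nat.factorial (k+2+1) from rfl, h3]
  rw [show Nat.factorial (k+2) = Nat.factorial (k+1+1) from rfl, h2, h1]
  field_simp
  push_cast; ring

lemma c1_zero : c1 0 = -(1/2) := by
  simp [c1, Nat.factorial]
  norm_num

lemma c0_zero : c0 0 = 1 := by
  simp [c0, Nat.factorial]

lemma summable_aux (b : ℕ → ℝ) (hb : ∀ m, |b m| ≤ 1 / (Nat.factorial m : ℝ)) (t : ℝ) :
    Summable (fun m => b m * t ^ m) := by
  apply Summable.of_norm_bounded (Real.summable_pow_div_factorial |t|)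
  intro m
  rw [Real.norm_eq_abs, abs_mul, abs_pow]
  calc |b m| * |t| ^ m ≤ (1 / (Nat.factorial m : ℝ)) * |t| ^ m := by
        gcongr; exact hb m
    _ = |t| ^ m / (Nat.factorial m : ℝ) := by ring

lemma summable_u (r : ℝ) :
    Summable (fun m : ℕ => (m : ℝ) * r ^ (m - 1) / (Nat.factorial m : ℝ)) := by
  rw [← summable_nat_add_iff 1]
  apply (Real.summable_pow_div_factorial r).congr
  intro n
  have h2 := fact_pos' n
  simp only [Nat.add_sub_cancel, fact_cast_succ]
  push_cast
  field_simp

lemma norm_term_le (b : ℕ → ℝ) (hb : ∀ m, |b m| ≤ 1 / (Nat.factorial m : ℝ)) (R : ℝ)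
    (m : ℕ) (y : ℝ) (hyR : |y| ≤ R) :
    ‖b m * ((m : ℝ) * y ^ (m - 1))‖ ≤ (m : ℝ) * R ^ (m - 1) / (Nat.factorial m : ℝ) := by
  have h2 := fact_pos' m
  rw [Real.norm_eq_abs, abs_mul, abs_mul, Nat.abs_cast, abs_pow]
  calc |b m| * ((m:ℝ) * |y| ^ (m-1)) ≤ (1 / (Nat.factorial m : ℝ)) * ((m:ℝ) * R ^ (m-1)) := by
        gcongr
        exact hb m
    _ = (m : ℝ) * R ^ (m-1) / (Nat.factorial m : ℝ) := by ring

lemma summable_D (b : ℕ → ℝ) (hb : ∀ m, |b m| ≤ 1 / (Nat.factorial m : ℝ)) (t : ℝ) :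
    Summable (fun m => b m * ((m : ℝ) * t ^ (m - 1))) :=
  Summable.of_norm_bounded (summable_u |t|) fun m => norm_term_le b hb _ m t le_rfl

lemma tsum_shift (f : ℕ → ℝ) (hf : Summable f) (h0 : f 0 = 0) :
    ∑' m, f m = ∑' m, f (m + 1) := by
  rw [hf.tsum_eq_zero_add, h0, zero_add]

lemma hasDerivAt_G (b : ℕ → ℝ) (hb : ∀ m, |b m| ≤ 1 / (Nat.factorial m : ℝ)) (t : ℝ) :
    HasDerivAt (fun s => ∑' m, b m * s ^ m) (∑' m, b m * ((m : ℝ) * t ^ (m - 1))) t := by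
  set R : ℝ := |t| + 1 with hR
  have htmem : t ∈ Metric.ball (0 : ℝ) R := by
    simp [Metric.mem_ball, Real.dist_eq, hR]
  refine hasDerivAt_tsum_of_isPreconnected (summable_u R) Metric.isOpen_ball
    (convex_ball (0:ℝ) R).isPreconnected
    (fun m y _ => (hasDerivAt_pow m y).const_mul (b m)) ?_ htmem
    (summable_aux b hb t) htmem
  intro m y hy
  have hyR : |y| ≤ R := by
    have := Metric.mem_ball.1 hy
    rw [Real.dist_eq, sub_zero] at this
    linarith
  exact norm_term_le b hb R m y hyR

lemma hasDerivAt_g0 (t : ℝ) : HasDerivAt g0 (g1 t) t := by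
  have H := hasDerivAt_G c0 c0_abs t
  have he : ∑' m, c0 m * ((m : ℝ) * t ^ (m - 1)) = g1 t := by
    rw [tsum_shift _ (summable_D c0 c0_abs t) (by simp)]
    apply tsum_congr
    intro k
    have hc : ((k + 1 : ℕ) : ℝ) = (k : ℝ) + 1 := by push_cast; ring
    simp only [Nat.add_sub_cancel, hc]
    rw [← c0_shift k]
    ring
  rw [← he]
  exact H

lemma hasDerivAt_g1 (t : ℝ) : HasDerivAt g1 (g2 t) t := by
  have H := hasDerivAt_G c1 c1_abs t
  have he : ∑' m, c1 m * ((m : ℝ) * t ^ (m - 1)) = g2 t := by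
    rw [tsum_shift _ (summable_D c1 c1_abs t) (by simp)]
    apply tsum_congr
    intro k
    have hc : ((k + 1 : ℕ) : ℝ) = (k : ℝ) + 1 := by push_cast; ring
    simp only [Nat.add_sub_cancel, hc]
    rw [← c1_shift k]
    ring
  rw [← he]
  exact H

lemma g_ode (t : ℝ) : t * g2 t + 2 * g1 t + g0 t = 0 := by
  have S0 := summable_aux c0 c0_abs t
  have S1 := summable_aux c1 c1_abs t
  have h2 : t * g2 t = ∑' m, c2 m * t ^ (m + 1) := by
    rw [g2, ← tsum_mul_left]
    exact tsum_congr fun m => by rw [pow_succ]; ring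
  have h10 : 2 * g1 t + g0 t = ∑' m, (2 * c1 m + c0 m) * t ^ m := by
    rw [g1, g0, ← tsum_mul_left, ← Summable.tsum_add (S1.mul_left 2) S0]
    exact tsum_congr fun m => by ring
  have hsum : Summable (fun m => (2 * c1 m + c0 m) * t ^ m) := by
    apply Summable.congr ((S1.mul_left 2).add S0)
    intro m; ring
  have h0 : (2 * c1 0 + c0 0) * t ^ 0 = 0 := by rw [c1_zero, c0_zero]; ring
  have hfinal : (∑' m, c2 m * t ^ (m + 1)) + (∑' m, (2 * c1 m + c0 m) * t ^ m) = 0 := by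
    rw [tsum_shift _ hsum h0]
    have hterm : ∀ k : ℕ, (2 * c1 (k + 1) + c0 (k + 1)) * t ^ (k + 1) = -(c2 k * t ^ (k + 1)) :=
      fun k => by rw [ode_term]; ring
    rw [tsum_congr hterm, tsum_neg]
    ring
  linarith [h2, h10, hfinal]

lemma g0_zero : g0 0 = 1 := by
  rw [g0, tsum_eq_single 0 (fun m hm => by simp [zero_pow hm])]
  simp [c0_zero]

lemma contDiff_g0 : ContDiff ℝ (⊤ : ℕ∞) g0 := by
  set p := FormalMultilinearSeries.ofScalars ℝ c0 with hp
  have hrad : p.radius = ⊤ := by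
    apply FormalMultilinearSeries.radius_eq_top_of_summable_norm
    intro r
    apply Summable.of_nonneg_of_le (fun n => by positivity) (fun n => ?_)
      (Real.summable_pow_div_factorial (r : ℝ))
    rw [hp, FormalMultilinearSeries.ofScalars_norm, Real.norm_eq_abs]
    calc |c0 n| * (r:ℝ) ^ n ≤ (1 / (Nat.factorial n : ℝ)) * (r:ℝ) ^ n := by
          gcongr; exact c0_abs n
      _ = (r : ℝ) ^ n / (Nat.factorial n : ℝ) := by ring
  have hball : HasFPowerSeriesOnBall p.sum p 0 ⊤ := by
    have := p.hasFPowerSeriesOnBall (by rw [hrad]; exact ENNReal.zero_lt_top)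
    rwa [hrad] at this
  have hg : g0 = p.sum := by
    funext t
    rw [g0, FormalMultilinearSeries.sum]
    exact tsum_congr fun n => by
      rw [hp, FormalMultilinearSeries.ofScalars_apply_eq, smul_eq_mul]
  rw [hg]
  apply contDiff_iff_contDiffAt.2
  intro t
  exact (hball.analyticAt_of_mem (by simp)).contDiffAt

end SK15

/-- For constants `a > 0`, `c`, `λ` with `λ + c > 0` and `μ = (λ+c)/a`, the inverse kernel
`l(x,y) = -(μ/2) y ∑_{m≥0} (-1)^m (μ(x²-y²)/4)^m/(m!(m+1)!)`
(`= -μ y J₁(√(μ(x²-y²)))/√(μ(x²-y²))`) is smooth on `ℝ²` and satisfies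
(i) `a l_xx - a l_yy = -(λ+c) l`; (ii) `l(x,0) = 0`; (iii) `l(x,x) = -((λ+c)/(2a)) x`,
so that `2a (d/dx)[l(x,x)] = -(λ+c)`. -/
theorem stmt_15 (a c lam μ : ℝ) (ha : 0 < a) (hlc : 0 < lam + c)
    (hμ : μ = (lam + c) / a)
    (l : ℝ → ℝ → ℝ)
    (hl : ∀ x y : ℝ, l x y =
      -(μ / 2) * y * ∑' m : ℕ, (-1 : ℝ) ^ m * (μ * (x ^ 2 - y ^ 2) / 4) ^ m /
        ((Nat.factorial m : ℝ) * (Nat.factorial (m + 1) : ℝ))) :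
    ContDiff ℝ (⊤ : ℕ∞) (fun p : ℝ × ℝ => l p.1 p.2) ∧
    (∀ x y : ℝ, a * iteratedDeriv 2 (fun x' => l x' y) x
        - a * iteratedDeriv 2 (fun y' => l x y') y = -(lam + c) * l x y) ∧
    (∀ x : ℝ, l x 0 = 0) ∧
    (∀ x : ℝ, l x x = -((lam + c) / (2 * a)) * x) ∧
    (∀ x : ℝ, 2 * a * deriv (fun ξ => l ξ ξ) x = -(lam + c)) := by
  have haμ : a * μ = lam + c := by rw [hμ]; field_simp
  have hlg : ∀ x y : ℝ, l x y = -(μ / 2) * y * SK15.g0 (μ * (x ^ 2 - y ^ 2) / 4) := by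
    intro x y
    rw [hl x y, SK15.g0]
    congr 1
    exact tsum_congr fun m => by rw [SK15.c0]; ring
  have hiii : ∀ x : ℝ, l x x = -((lam + c) / (2 * a)) * x := by
    intro x
    have h0 : μ * (x ^ 2 - x ^ 2) / 4 = 0 := by ring
    rw [hlg x x, h0, SK15.g0_zero, hμ]
    ring
  refine ⟨?_, ?_, ?_, hiii, ?_⟩
  · have heq : (fun p : ℝ × ℝ => l p.1 p.2)
        = fun p : ℝ × ℝ => -(μ / 2) * p.2 * SK15.g0 (μ * (p.1 ^ 2 - p.2 ^ 2) / 4) :=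
      funext fun p => hlg p.1 p.2
    rw [heq]
    have hinner : ContDiff ℝ (⊤ : ℕ∞) (fun p : ℝ × ℝ => μ * (p.1 ^ 2 - p.2 ^ 2) / 4) := by
      apply ContDiff.div_const
      exact ContDiff.mul contDiff_const ((contDiff_fst.pow 2).sub (contDiff_snd.pow 2))
    exact (contDiff_const.mul contDiff_snd).mul (SK15.contDiff_g0.comp hinner)
  · intro x y
    have hu : ∀ s : ℝ, HasDerivAt (fun s' => μ * (s' ^ 2 - y ^ 2) / 4) (μ * s / 2) s := by
      intro s
      have h := (((hasDerivAt_pow 2 s).sub_const (y ^ 2)).const_mul μ).div_const 4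
      refine h.congr_deriv ?_
      push_cast; ring
    have hv : ∀ s : ℝ, HasDerivAt (fun s' => μ * (x ^ 2 - s' ^ 2) / 4) (-(μ * s / 2)) s := by
      intro s
      have h := (((hasDerivAt_pow 2 s).const_sub (x ^ 2)).const_mul μ).div_const 4
      refine h.congr_deriv ?_
      push_cast; ring
    -- x direction
    have hFx : (fun x' => l x' y) = fun s => -(μ / 2) * y * SK15.g0 (μ * (s ^ 2 - y ^ 2) / 4) :=
      funext fun s => hlg s y
    have hD1 : ∀ s : ℝ, HasDerivAt (fun s => -(μ / 2) * y * SK15.g0 (μ * (s ^ 2 - y ^ 2) / 4))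
        (-(μ / 2) * y * (SK15.g1 (μ * (s ^ 2 - y ^ 2) / 4) * (μ * s / 2))) s := by
      intro s
      exact ((SK15.hasDerivAt_g0 _).comp s (hu s)).const_mul (-(μ / 2) * y)
    have hD2 : HasDerivAt
        (fun s => -(μ / 2) * y * (SK15.g1 (μ * (s ^ 2 - y ^ 2) / 4) * (μ * s / 2)))
        (-(μ / 2) * y * (SK15.g2 (μ * (x ^ 2 - y ^ 2) / 4) * (μ * x / 2) * (μ * x / 2)
          + SK15.g1 (μ * (x ^ 2 - y ^ 2) / 4) * (μ / 2))) x := by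
      have hmul : HasDerivAt (fun s : ℝ => μ * s / 2) (μ / 2) x := by
        have h := ((hasDerivAt_id x).const_mul μ).div_const 2
        refine h.congr_deriv ?_
        ring
      have h := (((SK15.hasDerivAt_g1 _).comp x (hu x)).mul hmul).const_mul (-(μ / 2) * y)
      refine h.congr_deriv ?_
      all_goals (first | ring1 | simp only [Function.comp_apply, id_eq])
    have hxx : iteratedDeriv 2 (fun x' => l x' y) x
        = -(μ / 2) * y * (SK15.g2 (μ * (x ^ 2 - y ^ 2) / 4) * (μ * x / 2) * (μ * x / 2)
          + SK15.g1 (μ * (x ^ 2 - y ^ 2) / 4) * (μ / 2)) := by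
      rw [hFx, iteratedDeriv_succ, iteratedDeriv_one]
      rw [show deriv (fun s => -(μ / 2) * y * SK15.g0 (μ * (s ^ 2 - y ^ 2) / 4))
          = (fun s => -(μ / 2) * y * (SK15.g1 (μ * (s ^ 2 - y ^ 2) / 4) * (μ * s / 2)))
        from funext fun s => (hD1 s).deriv]
      exact hD2.deriv
    -- y direction
    have hFy : (fun y' => l x y') = fun s => -(μ / 2) * s * SK15.g0 (μ * (x ^ 2 - s ^ 2) / 4) :=
      funext fun s => hlg x s
    have hE1 : ∀ s : ℝ, HasDerivAt (fun s => -(μ / 2) * s * SK15.g0 (μ * (x ^ 2 - s ^ 2) / 4))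
        (-(μ / 2) * SK15.g0 (μ * (x ^ 2 - s ^ 2) / 4)
          + (μ ^ 2 / 4) * s ^ 2 * SK15.g1 (μ * (x ^ 2 - s ^ 2) / 4)) s := by
      intro s
      have h := ((hasDerivAt_id s).const_mul (-(μ / 2))).mul
        ((SK15.hasDerivAt_g0 _).comp s (hv s))
      refine h.congr_deriv ?_
      all_goals (first | ring1 | (simp only [Function.comp_apply, id_eq]; push_cast; ring1))
    have hE2 : HasDerivAt
        (fun s => -(μ / 2) * SK15.g0 (μ * (x ^ 2 - s ^ 2) / 4)
          + (μ ^ 2 / 4) * s ^ 2 * SK15.g1 (μ * (x ^ 2 - s ^ 2) / 4))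
        (-(μ / 2) * (SK15.g1 (μ * (x ^ 2 - y ^ 2) / 4) * (-(μ * y / 2)))
          + ((μ ^ 2 / 4) * (2 * y) * SK15.g1 (μ * (x ^ 2 - y ^ 2) / 4)
            + (μ ^ 2 / 4) * y ^ 2 * (SK15.g2 (μ * (x ^ 2 - y ^ 2) / 4) * (-(μ * y / 2))))) y := by
      have hA := ((SK15.hasDerivAt_g0 _).comp y (hv y)).const_mul (-(μ / 2))
      have hB := (((hasDerivAt_pow 2 y).const_mul (μ ^ 2 / 4)).mul
        ((SK15.hasDerivAt_g1 _).comp y (hv y)))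
      have h := hA.add hB
      refine h.congr_deriv ?_
      all_goals (first | ring1 | (simp only [Function.comp_apply, id_eq]; push_cast; ring1))
    have hyy : iteratedDeriv 2 (fun y' => l x y') y
        = -(μ / 2) * (SK15.g1 (μ * (x ^ 2 - y ^ 2) / 4) * (-(μ * y / 2)))
          + ((μ ^ 2 / 4) * (2 * y) * SK15.g1 (μ * (x ^ 2 - y ^ 2) / 4)
            + (μ ^ 2 / 4) * y ^ 2 * (SK15.g2 (μ * (x ^ 2 - y ^ 2) / 4) * (-(μ * y / 2)))) := by
      rw [hFy, iteratedDeriv_succ, iteratedDeriv_one]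
      rw [show deriv (fun s => -(μ / 2) * s * SK15.g0 (μ * (x ^ 2 - s ^ 2) / 4))
          = (fun s => -(μ / 2) * SK15.g0 (μ * (x ^ 2 - s ^ 2) / 4)
            + (μ ^ 2 / 4) * s ^ 2 * SK15.g1 (μ * (x ^ 2 - s ^ 2) / 4))
        from funext fun s => (hE1 s).deriv]
      exact hE2.deriv
    rw [hxx, hyy, hlg x y]
    have hode := SK15.g_ode (μ * (x ^ 2 - y ^ 2) / 4)
    linear_combination (-(a * μ ^ 2 * y / 2)) * hode
      + ((μ / 2) * y * SK15.g0 (μ * (x ^ 2 - y ^ 2) / 4)) * haμ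
  · intro x
    rw [hlg x 0]
    ring
  · intro x
    have hfun : (fun ξ => l ξ ξ) = fun ξ => -((lam + c) / (2 * a)) * ξ :=
      funext fun ξ => hiii ξ
    rw [hfun]
    have hd : HasDerivAt (fun ξ : ℝ => -((lam + c) / (2 * a)) * ξ)
        (-((lam + c) / (2 * a))) x := by
      simpa using (hasDerivAt_id x).const_mul (-((lam + c) / (2 * a)))
    rw [hd.deriv]
    field_simp
end SK15
end
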